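/- arXiv:2406.07460 — 4 statements merged into one kernel-verified Lean document; each statement's English description precedes it below -/
import Mathlib

section
/- For every real number N > 0 and all real numbers a > 0 and b > 0, one has |F_N(a) − F_N(b)| ≤ (1/N) · F_N(a) · F_N(b) · |a − b|. -/
/-- The cut-off function `F_N(r) = min {1, N/r}`. -/
noncomputable def FN (N r : ℝ) : ℝ := min 1 (N / r)

theorem cutoff_lipschitz (N a b : ℝ) (hN : 0 < N) (ha : 0 < a) (hb : 0 < b) :
    |FN N a - FN N b| ≤ (1 / N) * FN N a * FN N b * |a - b| := by
  unfold FN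
  rcases le_total a N with hA | hA <;> rcases le_total b N with hB | hB
  · rw [min_eq_left (by rw [le_div_iff₀ ha]; linarith),
      min_eq_left (by rw [le_div_iff₀ hb]; linarith)]
    simp
    positivity
  · rw [min_eq_left (by rw [le_div_iff₀ ha]; linarith),
      min_eq_right (by rw [div_le_one hb]; linarith)]
    rw [abs_of_nonneg (by rw [sub_nonneg, div_le_one hb]; linarith),
      abs_of_nonpos (by linarith)]
    have h2 : (1:ℝ) / N * 1 * (N / b) * -(a - b) = (b - a) / b := by
      field_simp
      ring
    rw [h2, le_div_iff₀ hb]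
    have h3 : (1 - N / b) * b = b - N := by field_simp
    rw [h3]; linarith
  · rw [min_eq_right (by rw [div_le_one ha]; linarith),
      min_eq_left (by rw [le_div_iff₀ hb]; linarith)]
    rw [abs_of_nonpos (by rw [sub_nonpos, div_le_one ha]; linarith),
      abs_of_nonneg (by linarith)]
    have h1 : -(N / a - 1) = (a - N) / a := by field_simp; ring
    have h2 : (1 / N) * (N / a) * 1 * (a - b) = (a - b) / a := by field_simp
    rw [h1, h2]
    gcongr
  · rw [min_eq_right (by rw [div_le_one ha]; linarith),
      min_eq_right (by rw [div_le_one hb]; linarith)]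
    have : N / a - N / b = N * (b - a) / (a * b) := by field_simp
    rw [this, abs_div, abs_mul, abs_of_nonneg hN.le, abs_of_pos (mul_pos ha hb)]
    have h2 : (1 / N) * (N / a) * (N / b) * |a - b| = N * |b - a| / (a * b) := by
      rw [abs_sub_comm]; field_simp
    rw [h2]
end

section
/- Let E be a real normed vector space and N > 0. For all u, v ∈ E with ‖u‖ > 0 and ‖v‖ > 0, one has |F_N(‖u‖) − F_N(‖v‖)| ≤ (1/N) · F_N(‖u‖) · F_N(‖v‖) · ‖u − v‖. -/
lemma FN_eq_div_max (N a : ℝ) (hN : 0 < N) (ha : 0 < a) :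
    FN N a = N / max a N := by
  unfold FN
  rcases le_total a N with h | h
  · rw [max_eq_right h, min_eq_left ((one_le_div ha).2 h), div_self hN.ne']
  · rw [max_eq_left h, min_eq_right ((div_le_one ha).2 h)]

theorem cutoff_lipschitz_norm {E : Type*} [NormedAddCommGroup E] [NormedSpace ℝ E]
    (N : ℝ) (hN : 0 < N) (u v : E) (hu : 0 < ‖u‖) (hv : 0 < ‖v‖) :
    |FN N ‖u‖ - FN N ‖v‖| ≤ (1 / N) * FN N ‖u‖ * FN N ‖v‖ * ‖u - v‖ := by
  rw [FN_eq_div_max N _ hN hu, FN_eq_div_max N _ hN hv]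
  set A := max ‖u‖ N with hA
  set B := max ‖v‖ N with hB
  have hA0 : 0 < A := lt_of_lt_of_le hN (le_max_right _ _)
  have hB0 : 0 < B := lt_of_lt_of_le hN (le_max_right _ _)
  have key : |B - A| ≤ ‖u - v‖ := by
    calc |B - A| = |max ‖v‖ N - max ‖u‖ N| := rfl
    _ ≤ |‖v‖ - ‖u‖| := abs_max_sub_max_le_abs _ _ _
    _ ≤ ‖v - u‖ := abs_norm_sub_norm_le _ _
    _ = ‖u - v‖ := norm_sub_rev _ _
  have heq : N / A - N / B = N * (B - A) / (A * B) := by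
    field_simp
  rw [heq, abs_div, abs_mul, abs_of_pos hN, abs_of_pos (mul_pos hA0 hB0)]
  have hRHS : (1 / N) * (N / A) * (N / B) * ‖u - v‖ = N * ‖u - v‖ / (A * B) := by
    field_simp
  rw [hRHS]
  gcongr
end

section
/- Let E be a real normed vector space, f : ℝ → E a measurable function such that t ↦ ‖f(t)‖² is integrable on every compact interval, and f_∞ ∈ E. Suppose f satisfies Assumption (F). Then for every κ > 0 and every τ ∈ ℝ there exists M > 0 such that for every s ≤ τ the function r ↦ e^{κ(r−s)} ‖f(r)‖² is integrable on (−∞, s] and ∫_{−∞}^{s} e^{κ(r−s)} ‖f(r)‖² dr ≤ M; that is, sup_{s ≤ τ} ∫_{−∞}^{s} e^{κ(r−s)} ‖f(r)‖² dr < +∞. -/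
open MeasureTheory Filter Real Set intervalIntegral

lemma exp_interval_val {κ : ℝ} (hκ : 0 < κ) (s y : ℝ) :
    ∫ r in y..s, Real.exp (κ * (r - s)) = κ⁻¹ * (1 - Real.exp (κ * (y - s))) := by
  have : ∀ r : ℝ, Real.exp (κ * (r - s)) = Real.exp (κ * r - κ * s) := fun r => by ring_nf
  simp_rw [this]
  rw [integral_comp_mul_sub Real.exp hκ.ne' (κ * s)]
  rw [integral_exp]
  rw [smul_eq_mul]
  rw [sub_self, Real.exp_zero]

lemma exp_Iic_integrable {κ : ℝ} (hκ : 0 < κ) (s : ℝ) :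
    IntegrableOn (fun r : ℝ => Real.exp (κ * (r - s))) (Set.Iic s) := by
  refine integrableOn_Iic_of_intervalIntegral_norm_bounded κ⁻¹ s
    (fun y => ((Real.continuous_exp.comp (by continuity)).intervalIntegrable _ _).1) tendsto_id
    ((eventually_le_atBot s).mono fun y hy => ?_)
  simp only [id]
  have hv := exp_interval_val hκ s y
  rw [show (∫ x in y..s, ‖Real.exp (κ * (x - s))‖) = ∫ x in y..s, Real.exp (κ * (x - s)) from by
    congr 1; ext x; exact Real.norm_of_nonneg (Real.exp_pos _).le, hv]
  have h1 : Real.exp (κ * (y - s)) > 0 := Real.exp_pos _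
  calc κ⁻¹ * (1 - Real.exp (κ * (y - s))) ≤ κ⁻¹ * 1 := by
        refine mul_le_mul_of_nonneg_left (by linarith) (inv_nonneg.2 hκ.le)
    _ = κ⁻¹ := mul_one _

lemma exp_Iic_integral {κ : ℝ} (hκ : 0 < κ) (s : ℝ) :
    ∫ r in Set.Iic s, Real.exp (κ * (r - s)) = κ⁻¹ := by
  refine tendsto_nhds_unique
    (intervalIntegral_tendsto_integral_Iic s (exp_Iic_integrable hκ s) tendsto_id) ?_
  have : Tendsto (fun y : ℝ => κ⁻¹ * (1 - Real.exp (κ * (y - s)))) atBot (nhds (κ⁻¹ * (1 - 0))) := by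
    refine Tendsto.const_mul _ (Tendsto.const_sub _ ?_)
    refine Real.tendsto_exp_atBot.comp ?_
    exact (tendsto_atBot_add_const_right _ (-s) tendsto_id).const_mul_atBot hκ |>.congr
      (fun x => by simp only [id_eq]; ring)
  simpa [exp_interval_val hκ s] using this

theorem backward_uniform_integral_bound {E : Type*} [NormedAddCommGroup E] [NormedSpace ℝ E]
    (f : ℝ → E) (finf : E)
    (hmeas : AEStronglyMeasurable f volume)
    (hloc : ∀ a b : ℝ, IntegrableOn (fun t => ‖f t‖ ^ 2) (Set.Icc a b))
    (hF1 : ∀ τ : ℝ, IntegrableOn (fun t => ‖f t - finf‖ ^ 2) (Set.Iic τ))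
    (hF2 : Tendsto (fun τ => ∫ t in Set.Iic τ, ‖f t - finf‖ ^ 2) atBot (nhds 0)) :
    ∀ κ : ℝ, 0 < κ → ∀ τ : ℝ, ∃ M : ℝ, 0 < M ∧ ∀ s ≤ τ,
      IntegrableOn (fun r => Real.exp (κ * (r - s)) * ‖f r‖ ^ 2) (Set.Iic s) ∧
      ∫ r in Set.Iic s, Real.exp (κ * (r - s)) * ‖f r‖ ^ 2 ≤ M := by
  intro κ hκ τ
  set I := ∫ t in Set.Iic τ, ‖f t - finf‖ ^ 2 with hI
  have hInonneg : 0 ≤ I := setIntegral_nonneg measurableSet_Iic fun t _ => by positivity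
  refine ⟨2 * I + 2 * ‖finf‖ ^ 2 * κ⁻¹ + 1, by positivity, fun s hs => ?_⟩
  -- dominating function
  set h : ℝ → ℝ := fun r => 2 * ‖f r - finf‖ ^ 2 + 2 * ‖finf‖ ^ 2 * Real.exp (κ * (r - s)) with hh
  have hFs : IntegrableOn (fun t => ‖f t - finf‖ ^ 2) (Set.Iic s) :=
    (hF1 τ).mono_set (Set.Iic_subset_Iic.2 hs)
  have hhint : IntegrableOn h (Set.Iic s) :=
    (hFs.const_mul 2).add ((exp_Iic_integrable hκ s).const_mul (2 * ‖finf‖ ^ 2))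
  -- pointwise bound for r ≤ s
  have hbound : ∀ r ∈ Set.Iic s, Real.exp (κ * (r - s)) * ‖f r‖ ^ 2 ≤ h r := by
    intro r hr
    have he1 : Real.exp (κ * (r - s)) ≤ 1 := by
      rw [← Real.exp_zero]
      exact Real.exp_le_exp.2 (by have : r ≤ s := hr; nlinarith)
    have he0 : 0 < Real.exp (κ * (r - s)) := Real.exp_pos _
    have htri : ‖f r‖ ≤ ‖f r - finf‖ + ‖finf‖ := by
      calc ‖f r‖ = ‖(f r - finf) + finf‖ := by rw [sub_add_cancel]
        _ ≤ ‖f r - finf‖ + ‖finf‖ := norm_add_le _ _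
    have ha : (0:ℝ) ≤ ‖f r - finf‖ := norm_nonneg _
    have hb : (0:ℝ) ≤ ‖finf‖ := norm_nonneg _
    have hc : (0:ℝ) ≤ ‖f r‖ := norm_nonneg _
    have hsq : ‖f r‖ ^ 2 ≤ 2 * ‖f r - finf‖ ^ 2 + 2 * ‖finf‖ ^ 2 := by
      have h4 : ‖f r‖ ^ 2 ≤ (‖f r - finf‖ + ‖finf‖) ^ 2 := by nlinarith
      nlinarith [sq_nonneg (‖f r - finf‖ - ‖finf‖)]
    have : Real.exp (κ * (r - s)) * ‖f r‖ ^ 2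
        ≤ Real.exp (κ * (r - s)) * (2 * ‖f r - finf‖ ^ 2 + 2 * ‖finf‖ ^ 2) :=
      mul_le_mul_of_nonneg_left hsq he0.le
    refine this.trans ?_
    show _ ≤ 2 * ‖f r - finf‖ ^ 2 + 2 * ‖finf‖ ^ 2 * Real.exp (κ * (r - s))
    nlinarith [mul_nonneg (sub_nonneg.2 he1) (sq_nonneg ‖f r - finf‖)]
  -- measurability
  have hfm : AEStronglyMeasurable (fun r => ‖f r‖ ^ 2) volume := by
    exact (hmeas.norm.mul hmeas.norm).congr (ae_of_all _ fun r => by simp [Pi.mul_apply, pow_two])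
  have hgm : AEStronglyMeasurable (fun r => Real.exp (κ * (r - s)) * ‖f r‖ ^ 2)
      (volume.restrict (Set.Iic s)) :=
    ((Real.continuous_exp.comp (by continuity)).aestronglyMeasurable.mul
      hfm.restrict)
  have hgint : IntegrableOn (fun r => Real.exp (κ * (r - s)) * ‖f r‖ ^ 2) (Set.Iic s) := by
    refine Integrable.mono' hhint hgm ?_
    refine (ae_restrict_iff' measurableSet_Iic).2 (Filter.Eventually.of_forall fun r hr => ?_)
    rw [Real.norm_of_nonneg (by positivity)]
    exact hbound r hr
  refine ⟨hgint, ?_⟩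
  have h1 : ∫ r in Set.Iic s, Real.exp (κ * (r - s)) * ‖f r‖ ^ 2 ≤ ∫ r in Set.Iic s, h r :=
    setIntegral_mono_on hgint hhint measurableSet_Iic hbound
  have h2 : ∫ r in Set.Iic s, h r
      = 2 * (∫ r in Set.Iic s, ‖f r - finf‖ ^ 2) + 2 * ‖finf‖ ^ 2 * κ⁻¹ := by
    rw [hh]
    rw [integral_add (hFs.const_mul 2) ((exp_Iic_integrable hκ s).const_mul (2 * ‖finf‖ ^ 2)),
      MeasureTheory.integral_const_mul, MeasureTheory.integral_const_mul, exp_Iic_integral hκ s]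
  have h3 : ∫ r in Set.Iic s, ‖f r - finf‖ ^ 2 ≤ I := by
    rw [hI]
    refine setIntegral_mono_set (hF1 τ) ?_ ?_
    · exact Filter.Eventually.of_forall fun t => by positivity
    · exact (Set.Iic_subset_Iic.2 hs).eventuallyLE
  calc ∫ r in Set.Iic s, Real.exp (κ * (r - s)) * ‖f r‖ ^ 2
      ≤ 2 * (∫ r in Set.Iic s, ‖f r - finf‖ ^ 2) + 2 * ‖finf‖ ^ 2 * κ⁻¹ := h1.trans_eq h2
    _ ≤ 2 * I + 2 * ‖finf‖ ^ 2 * κ⁻¹ := by linarith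
    _ ≤ 2 * I + 2 * ‖finf‖ ^ 2 * κ⁻¹ + 1 := by linarith
end

section
/- Let f : ℝ × ℝ³ → ℝ³ be jointly measurable and f_∞ : ℝ³ → ℝ³ be measurable with ∫_{ℝ³} |f_∞(x)|² dx < ∞. Suppose that the map t ↦ ∫_{ℝ³} |f(t,x)|² dx is integrable on every compact interval and that f satisfies Assumption (F) in the L²(ℝ³) norm, i.e. t ↦ ∫_{ℝ³} |f(t,x) − f_∞(x)|² dx is integrable on (−∞, τ] for every τ and its integral over (−∞, τ] tends to 0 as τ → −∞. Then for every κ > 0 and every τ ∈ ℝ, lim_{k→∞} sup_{s ≤ τ} ∫_{−∞}^{s} e^{κ(r−s)} ∫_{{x ∈ ℝ³ : |x| ≥ k}} |f(r,x)|² dx dr = 0; that is, the tails of the forcing f are backward-uniformly small. -/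
open MeasureTheory Filter

private lemma exp_integrableOn {κ : ℝ} (hκ : 0 < κ) (s : ℝ) :
    IntegrableOn (fun r => Real.exp (κ * (r - s))) (Set.Iic s) := by
  have h0 : Integrable ((Set.Iic (0:ℝ)).indicator Real.exp) := by
    rw [integrable_indicator_iff measurableSet_Iic]
    exact integrableOn_exp_Iic 0
  have h1 : Integrable (fun x : ℝ => ((Set.Iic (0:ℝ)).indicator Real.exp) (κ * x)) :=
    h0.comp_mul_left' hκ.ne'
  have h2 : Integrable (fun r : ℝ => ((Set.Iic (0:ℝ)).indicator Real.exp) (κ * (r - s))) :=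
    h1.comp_sub_right s
  have heq : (fun r : ℝ => ((Set.Iic (0:ℝ)).indicator Real.exp) (κ * (r - s)))
      = (Set.Iic s).indicator (fun r => Real.exp (κ * (r - s))) := by
    funext r
    by_cases h : r ≤ s
    · rw [Set.indicator_of_mem (show κ * (r - s) ∈ Set.Iic 0 from
        mul_nonpos_of_nonneg_of_nonpos hκ.le (sub_nonpos.2 h)),
        Set.indicator_of_mem (show r ∈ Set.Iic s from h)]
    · have hm : κ * (r - s) ∉ Set.Iic 0 := by
        simp only [Set.mem_Iic, not_le]
        nlinarith [lt_of_not_ge h]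
      rw [Set.indicator_of_notMem hm]
      exact (Set.indicator_of_notMem (show r ∉ Set.Iic s from h) _).symm
  rw [heq] at h2
  exact (integrable_indicator_iff measurableSet_Iic).mp h2

private lemma exp_integral {κ : ℝ} (hκ : 0 < κ) (s : ℝ) :
    ∫ r in Set.Iic s, Real.exp (κ * (r - s)) = 1 / κ := by
  have hderiv : ∀ x ∈ Set.Iio s, HasDerivAt (fun r => Real.exp (κ * (r - s)) / κ)
      (Real.exp (κ * (x - s))) x := by
    intro x _
    have h1 : HasDerivAt (fun r : ℝ => κ * (r - s)) κ x := by
      simpa using ((hasDerivAt_id x).sub_const s).const_mul κ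
    have h2 := h1.exp.div_const κ
    have : Real.exp (κ * (x - s)) * κ / κ = Real.exp (κ * (x - s)) := by
      field_simp
    rwa [this] at h2
  have hcont : ContinuousWithinAt (fun r => Real.exp (κ * (r - s)) / κ) (Set.Iic s) s :=
    ((Real.continuous_exp.comp (by continuity)).div_const κ).continuousWithinAt
  have htend : Tendsto (fun r => Real.exp (κ * (r - s)) / κ) atBot (nhds 0) := by
    have h0 : Tendsto (fun r : ℝ => r - s) atBot atBot := by
      simpa [sub_eq_add_neg] using tendsto_atBot_add_const_right atBot (-s) tendsto_id
    have h1 : Tendsto (fun r : ℝ => κ * (r - s)) atBot atBot := h0.const_mul_atBot hκ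
    have h2 := (Real.tendsto_exp_atBot.comp h1).div_const κ
    simpa using h2
  have := MeasureTheory.integral_Iic_of_hasDerivAt_of_tendsto hcont hderiv
    (exp_integrableOn hκ s) htend
  simpa using this

private lemma tail_tendsto {g : EuclideanSpace ℝ (Fin 3) → ℝ}
    (hg : AEStronglyMeasurable g volume) (hgnn : ∀ x, 0 ≤ g x) (hgi : Integrable g) :
    Tendsto (fun k : ℕ => ∫ x in {x : EuclideanSpace ℝ (Fin 3) | (k : ℝ) ≤ ‖x‖}, g x)
      atTop (nhds 0) := by
  have hS : ∀ k : ℕ, MeasurableSet {x : EuclideanSpace ℝ (Fin 3) | (k : ℝ) ≤ ‖x‖} :=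
    fun k => measurableSet_le measurable_const measurable_norm
  have key := tendsto_integral_of_dominated_convergence (μ := volume)
    (F := fun k : ℕ => ({x : EuclideanSpace ℝ (Fin 3) | (k : ℝ) ≤ ‖x‖}).indicator g)
    (f := fun _ => (0:ℝ)) (bound := g)
    (fun k => hg.indicator (hS k)) hgi
    (fun k => Eventually.of_forall fun x => by
      calc ‖({x : EuclideanSpace ℝ (Fin 3) | (k : ℝ) ≤ ‖x‖}).indicator g x‖
          ≤ ‖g x‖ := norm_indicator_le_norm_self g x
        _ = g x := Real.norm_of_nonneg (hgnn x))
    (Eventually.of_forall fun x => by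
      refine Filter.Tendsto.congr' ?_ tendsto_const_nhds
      filter_upwards [eventually_ge_atTop (⌊‖x‖⌋₊ + 1)] with n hn
      have hx : ¬ (n : ℝ) ≤ ‖x‖ := by
        push_neg
        calc ‖x‖ < ⌊‖x‖⌋₊ + 1 := Nat.lt_floor_add_one _
          _ ≤ (n : ℝ) := by exact_mod_cast hn
      exact (Set.indicator_of_notMem (show x ∉ {y : EuclideanSpace ℝ (Fin 3) | (n : ℝ) ≤ ‖y‖} from hx) g).symm)
  have heq : ∀ k : ℕ, ∫ x, ({x : EuclideanSpace ℝ (Fin 3) | (k : ℝ) ≤ ‖x‖}).indicator g x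
      = ∫ x in {x : EuclideanSpace ℝ (Fin 3) | (k : ℝ) ≤ ‖x‖}, g x :=
    fun k => integral_indicator (hS k)
  simpa [heq] using key

/-- Backward-uniform smallness of the tails of the forcing `f`. -/
theorem backward_uniform_tail_smallness
    (f : ℝ × EuclideanSpace ℝ (Fin 3) → EuclideanSpace ℝ (Fin 3))
    (finf : EuclideanSpace ℝ (Fin 3) → EuclideanSpace ℝ (Fin 3))
    (hf : Measurable f) (hfinf : Measurable finf)
    (hfinf2 : Integrable (fun x => ‖finf x‖ ^ 2))
    (hloc : ∀ a b : ℝ, IntegrableOn (fun t => ∫ x, ‖f (t, x)‖ ^ 2) (Set.Icc a b))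
    (hFae : ∀ᵐ t : ℝ, Integrable (fun x => ‖f (t, x) - finf x‖ ^ 2))
    (hF1 : ∀ τ : ℝ, IntegrableOn (fun t => ∫ x, ‖f (t, x) - finf x‖ ^ 2) (Set.Iic τ))
    (hF2 : Tendsto (fun τ => ∫ t in Set.Iic τ, ∫ x, ‖f (t, x) - finf x‖ ^ 2)
      atBot (nhds 0)) :
    ∀ κ : ℝ, 0 < κ → ∀ τ : ℝ, ∀ ε : ℝ, 0 < ε → ∃ K : ℕ, ∀ k : ℕ, K ≤ k → ∀ s ≤ τ,
      IntegrableOn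
        (fun r => Real.exp (κ * (r - s)) *
          ∫ x in {x : EuclideanSpace ℝ (Fin 3) | (k : ℝ) ≤ ‖x‖}, ‖f (r, x)‖ ^ 2)
        (Set.Iic s) ∧
      (∫ r in Set.Iic s, Real.exp (κ * (r - s)) *
          ∫ x in {x : EuclideanSpace ℝ (Fin 3) | (k : ℝ) ≤ ‖x‖}, ‖f (r, x)‖ ^ 2) ≤ ε := by
  intro κ hκ τ ε hε
  have hS : ∀ k : ℕ, MeasurableSet {x : EuclideanSpace ℝ (Fin 3) | (k : ℝ) ≤ ‖x‖} :=
    fun k => measurableSet_le measurable_const measurable_norm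
  have hsq : ∀ a b : EuclideanSpace ℝ (Fin 3), ‖a‖ ^ 2 ≤ 2 * ‖a - b‖ ^ 2 + 2 * ‖b‖ ^ 2 := by
    intro a b
    have h1 : ‖a‖ ≤ ‖a - b‖ + ‖b‖ := by
      calc ‖a‖ = ‖a - b + b‖ := by rw [sub_add_cancel]
        _ ≤ ‖a - b‖ + ‖b‖ := norm_add_le _ _
    nlinarith [mul_self_le_mul_self (norm_nonneg a) h1, sq_nonneg (‖a - b‖ - ‖b‖)]
  set G : ℕ → ℝ → ℝ := fun k t =>
    ∫ x in {x : EuclideanSpace ℝ (Fin 3) | (k : ℝ) ≤ ‖x‖}, ‖f (t, x) - finf x‖ ^ 2 with hG_def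
  set H : ℝ → ℝ := fun t => ∫ x, ‖f (t, x) - finf x‖ ^ 2 with hH_def
  set T : ℕ → ℝ := fun k =>
    ∫ x in {x : EuclideanSpace ℝ (Fin 3) | (k : ℝ) ≤ ‖x‖}, ‖finf x‖ ^ 2 with hT_def
  set A : ℕ → ℝ := fun k => ∫ t in Set.Iic τ, G k t with hA_def
  set C : ℝ := ∫ x, ‖finf x‖ ^ 2 with hC_def
  have hGnn : ∀ k t, 0 ≤ G k t := fun k t => integral_nonneg fun x => by positivity
  have hHnn : ∀ t, 0 ≤ H t := fun t => integral_nonneg fun x => by positivity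
  have hTnn : ∀ k, 0 ≤ T k := fun k => integral_nonneg fun x => by positivity
  have hCnn : 0 ≤ C := integral_nonneg fun x => by positivity
  have hq_meas : Measurable (fun p : ℝ × EuclideanSpace ℝ (Fin 3) => ‖f p - finf p.2‖ ^ 2) :=
    (hf.sub (hfinf.comp measurable_snd)).norm.pow_const 2
  have hq2_meas : Measurable (fun p : ℝ × EuclideanSpace ℝ (Fin 3) => ‖f p‖ ^ 2) :=
    hf.norm.pow_const 2
  have hG_meas : ∀ k, StronglyMeasurable (G k) := fun k =>
    hq_meas.stronglyMeasurable.integral_prod_right'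
      (ν := volume.restrict {x : EuclideanSpace ℝ (Fin 3) | (k : ℝ) ≤ ‖x‖})
  have hGH : ∀ᵐ t : ℝ, ∀ k, G k t ≤ H t := by
    filter_upwards [hFae] with t ht k
    exact setIntegral_le_integral ht (Eventually.of_forall fun x => by positivity)
  have hGlim : ∀ᵐ t : ℝ, Tendsto (fun k => G k t) atTop (nhds 0) := by
    filter_upwards [hFae] with t ht
    exact tail_tendsto ht.aestronglyMeasurable (fun x => by positivity) ht
  have hA_lim : Tendsto A atTop (nhds 0) := by
    have key := tendsto_integral_of_dominated_convergence (μ := volume.restrict (Set.Iic τ))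
      (F := fun k => G k) (f := fun _ => (0:ℝ)) (bound := H)
      (fun k => (hG_meas k).aestronglyMeasurable) (hF1 τ)
      (fun k => by
        filter_upwards [ae_restrict_of_ae hGH] with t ht
        rw [Real.norm_of_nonneg (hGnn k t)]
        exact ht k)
      (ae_restrict_of_ae hGlim)
    simpa using key
  have hT_lim : Tendsto T atTop (nhds 0) :=
    tail_tendsto (hfinf.norm.pow_const 2).aestronglyMeasurable (fun x => by positivity) hfinf2
  have hcomb : Tendsto (fun k => 2 * A k + 2 * T k / κ) atTop (nhds 0) := by
    have := (hA_lim.const_mul 2).add ((hT_lim.const_mul 2).div_const κ)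
    simpa using this
  obtain ⟨K, hK⟩ := (Filter.eventually_atTop.mp (hcomb.eventually_lt_const hε))
  refine ⟨K, fun k hk s hs => ?_⟩
  -- a.e. pointwise facts
  have hInt : ∀ᵐ r : ℝ, (∫ x in {x : EuclideanSpace ℝ (Fin 3) | (k : ℝ) ≤ ‖x‖}, ‖f (r, x)‖ ^ 2)
        ≤ 2 * G k r + 2 * T k ∧
      (∫ x in {x : EuclideanSpace ℝ (Fin 3) | (k : ℝ) ≤ ‖x‖}, ‖f (r, x)‖ ^ 2)
        ≤ 2 * H r + 2 * C := by
    filter_upwards [hFae] with r hr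
    have hmeas : AEStronglyMeasurable (fun x => ‖f (r, x)‖ ^ 2) volume :=
      ((hf.comp measurable_prodMk_left).norm.pow_const 2).aestronglyMeasurable
    have hbound : Integrable (fun x => 2 * ‖f (r, x) - finf x‖ ^ 2 + 2 * ‖finf x‖ ^ 2) :=
      (hr.const_mul 2).add (hfinf2.const_mul 2)
    have hint : Integrable (fun x => ‖f (r, x)‖ ^ 2) := by
      refine hbound.mono' hmeas (Eventually.of_forall fun x => ?_)
      rw [Real.norm_of_nonneg (by positivity)]
      exact hsq _ _
    constructor
    · calc (∫ x in {x : EuclideanSpace ℝ (Fin 3) | (k : ℝ) ≤ ‖x‖}, ‖f (r, x)‖ ^ 2)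
          ≤ ∫ x in {x : EuclideanSpace ℝ (Fin 3) | (k : ℝ) ≤ ‖x‖},
              (2 * ‖f (r, x) - finf x‖ ^ 2 + 2 * ‖finf x‖ ^ 2) := by
            refine setIntegral_mono_on hint.integrableOn hbound.integrableOn (hS k) ?_
            intro x _
            exact hsq _ _
        _ = 2 * G k r + 2 * T k := by
            rw [integral_add ((hr.integrableOn).const_mul 2) ((hfinf2.integrableOn).const_mul 2),
              integral_const_mul, integral_const_mul]
    · calc (∫ x in {x : EuclideanSpace ℝ (Fin 3) | (k : ℝ) ≤ ‖x‖}, ‖f (r, x)‖ ^ 2)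
          ≤ ∫ x, ‖f (r, x)‖ ^ 2 :=
            setIntegral_le_integral hint (Eventually.of_forall fun x => by positivity)
        _ ≤ ∫ x, (2 * ‖f (r, x) - finf x‖ ^ 2 + 2 * ‖finf x‖ ^ 2) :=
            integral_mono hint hbound fun x => hsq _ _
        _ = 2 * H r + 2 * C := by
            rw [integral_add (hr.const_mul 2) (hfinf2.const_mul 2),
              integral_const_mul, integral_const_mul]
  have htail_meas : StronglyMeasurable
      (fun r => ∫ x in {x : EuclideanSpace ℝ (Fin 3) | (k : ℝ) ≤ ‖x‖}, ‖f (r, x)‖ ^ 2) :=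
    hq2_meas.stronglyMeasurable.integral_prod_right'
      (ν := volume.restrict {x : EuclideanSpace ℝ (Fin 3) | (k : ℝ) ≤ ‖x‖})
  have htail_nn : ∀ r : ℝ,
      0 ≤ ∫ x in {x : EuclideanSpace ℝ (Fin 3) | (k : ℝ) ≤ ‖x‖}, ‖f (r, x)‖ ^ 2 :=
    fun r => integral_nonneg fun x => by positivity
  have hexp_cont : Continuous (fun r : ℝ => Real.exp (κ * (r - s))) :=
    Real.continuous_exp.comp (continuous_const.mul (continuous_id.sub continuous_const))
  have hexp_le : ∀ r : ℝ, r ≤ s → Real.exp (κ * (r - s)) ≤ 1 := fun r hr =>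
    Real.exp_le_one_iff.mpr (mul_nonpos_of_nonneg_of_nonpos hκ.le (sub_nonpos.2 hr))
  have hφmeas : AEStronglyMeasurable
      (fun r => Real.exp (κ * (r - s)) *
        ∫ x in {x : EuclideanSpace ℝ (Fin 3) | (k : ℝ) ≤ ‖x‖}, ‖f (r, x)‖ ^ 2)
      (volume.restrict (Set.Iic s)) :=
    (hexp_cont.stronglyMeasurable.mul htail_meas).aestronglyMeasurable
  have hψint : IntegrableOn (fun r => 2 * H r + (2 * C) * Real.exp (κ * (r - s))) (Set.Iic s) :=
    ((hF1 s).const_mul 2).add ((exp_integrableOn hκ s).const_mul (2 * C))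
  have hφint : IntegrableOn
      (fun r => Real.exp (κ * (r - s)) *
        ∫ x in {x : EuclideanSpace ℝ (Fin 3) | (k : ℝ) ≤ ‖x‖}, ‖f (r, x)‖ ^ 2)
      (Set.Iic s) := by
    refine hψint.mono' hφmeas ?_
    filter_upwards [ae_restrict_of_ae hInt, ae_restrict_mem measurableSet_Iic] with r hr hrs
    rw [Real.norm_of_nonneg (mul_nonneg (Real.exp_pos _).le (htail_nn r))]
    calc Real.exp (κ * (r - s)) *
          ∫ x in {x : EuclideanSpace ℝ (Fin 3) | (k : ℝ) ≤ ‖x‖}, ‖f (r, x)‖ ^ 2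
        ≤ Real.exp (κ * (r - s)) * (2 * H r + 2 * C) :=
          mul_le_mul_of_nonneg_left hr.2 (Real.exp_pos _).le
      _ = Real.exp (κ * (r - s)) * (2 * H r) + (2 * C) * Real.exp (κ * (r - s)) := by ring
      _ ≤ 2 * H r + (2 * C) * Real.exp (κ * (r - s)) := by
          have h2 : Real.exp (κ * (r - s)) * (2 * H r) ≤ 2 * H r :=
            mul_le_of_le_one_left (by positivity) (hexp_le r hrs)
          linarith
  refine ⟨hφint, ?_⟩
  have hG_int : ∀ t0 : ℝ, IntegrableOn (G k) (Set.Iic t0) := fun t0 => by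
    refine (hF1 t0).mono' (hG_meas k).aestronglyMeasurable ?_
    filter_upwards [ae_restrict_of_ae hGH] with r hr
    rw [Real.norm_of_nonneg (hGnn k r)]
    exact hr k
  have hexpG_int : IntegrableOn (fun r => Real.exp (κ * (r - s)) * G k r) (Set.Iic s) := by
    refine (hF1 s).mono'
      ((hexp_cont.stronglyMeasurable.mul (hG_meas k)).aestronglyMeasurable) ?_
    filter_upwards [ae_restrict_of_ae hGH, ae_restrict_mem measurableSet_Iic] with r hr hrs
    rw [Real.norm_of_nonneg (mul_nonneg (Real.exp_pos _).le (hGnn k r))]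
    calc Real.exp (κ * (r - s)) * G k r
        ≤ 1 * G k r := mul_le_mul_of_nonneg_right (hexp_le r hrs) (hGnn k r)
      _ = G k r := one_mul _
      _ ≤ H r := hr k
  have hχint : IntegrableOn
      (fun r => 2 * (Real.exp (κ * (r - s)) * G k r) + (2 * T k) * Real.exp (κ * (r - s)))
      (Set.Iic s) :=
    (hexpG_int.const_mul 2).add ((exp_integrableOn hκ s).const_mul (2 * T k))
  have hstep1 : (∫ r in Set.Iic s, Real.exp (κ * (r - s)) *
        ∫ x in {x : EuclideanSpace ℝ (Fin 3) | (k : ℝ) ≤ ‖x‖}, ‖f (r, x)‖ ^ 2)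
      ≤ ∫ r in Set.Iic s,
          (2 * (Real.exp (κ * (r - s)) * G k r) + (2 * T k) * Real.exp (κ * (r - s))) := by
    refine integral_mono_ae hφint hχint ?_
    filter_upwards [ae_restrict_of_ae hInt] with r hr
    calc Real.exp (κ * (r - s)) *
          ∫ x in {x : EuclideanSpace ℝ (Fin 3) | (k : ℝ) ≤ ‖x‖}, ‖f (r, x)‖ ^ 2
        ≤ Real.exp (κ * (r - s)) * (2 * G k r + 2 * T k) :=
          mul_le_mul_of_nonneg_left hr.1 (Real.exp_pos _).le
      _ = 2 * (Real.exp (κ * (r - s)) * G k r) + (2 * T k) * Real.exp (κ * (r - s)) := by ring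
  have hstep2 : (∫ r in Set.Iic s,
        (2 * (Real.exp (κ * (r - s)) * G k r) + (2 * T k) * Real.exp (κ * (r - s))))
      = 2 * (∫ r in Set.Iic s, Real.exp (κ * (r - s)) * G k r) + (2 * T k) * (1 / κ) := by
    rw [integral_add (hexpG_int.const_mul 2) ((exp_integrableOn hκ s).const_mul (2 * T k)),
      integral_const_mul, integral_const_mul, exp_integral hκ s]
  have hstep3 : (∫ r in Set.Iic s, Real.exp (κ * (r - s)) * G k r) ≤ A k := by
    calc (∫ r in Set.Iic s, Real.exp (κ * (r - s)) * G k r)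
        ≤ ∫ r in Set.Iic s, G k r := by
          refine integral_mono_ae hexpG_int (hG_int s) ?_
          filter_upwards [ae_restrict_mem measurableSet_Iic] with r hrs
          calc Real.exp (κ * (r - s)) * G k r
              ≤ 1 * G k r := mul_le_mul_of_nonneg_right (hexp_le r hrs) (hGnn k r)
            _ = G k r := one_mul _
      _ ≤ A k :=
          setIntegral_mono_set (hG_int τ) (Eventually.of_forall fun r => hGnn k r)
            ((Set.Iic_subset_Iic.2 hs).eventuallyLE)
  have hfin := hK k hk
  calc (∫ r in Set.Iic s, Real.exp (κ * (r - s)) *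
        ∫ x in {x : EuclideanSpace ℝ (Fin 3) | (k : ℝ) ≤ ‖x‖}, ‖f (r, x)‖ ^ 2)
      ≤ 2 * (∫ r in Set.Iic s, Real.exp (κ * (r - s)) * G k r) + (2 * T k) * (1 / κ) :=
        hstep1.trans_eq hstep2
    _ ≤ 2 * A k + 2 * T k / κ := by
        have h4 : (2 * T k) * (1 / κ) = 2 * T k / κ := by ring
        linarith
    _ ≤ ε := hfin.le
end
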